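/- Circles centered at the feet of the altitudes of an acute triangle ABC and passing through the circumcenter O cut the sides of the triangle in six points all at distance √((R² + OH²)/2) from the orthocenter H; hence these six points are concyclic on the first Droz-Farny circle. -/
import Mathlib

open EuclideanGeometry

private lemma coll_param {V P : Type*} [NormedAddCommGroup V] [InnerProductSpace ℝ V]
    [MetricSpace P] [NormedAddTorsor V P] {B C X : P}
    (h : Collinear ℝ ({B, C, X} : Set P)) (hBC : B ≠ C) :
    ∃ s : ℝ, X -ᵥ B = s • (C -ᵥ B) := by
  obtain ⟨v, hv⟩ := (collinear_iff_of_mem (show B ∈ ({B,C,X} : Set P) by simp)).mp h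
  obtain ⟨rC, hC⟩ := hv C (by simp)
  obtain ⟨rX, hX⟩ := hv X (by simp)
  have hCv : C -ᵥ B = rC • v := by rw [hC]; simp
  have hXv : X -ᵥ B = rX • v := by rw [hX]; simp
  have hrC : rC ≠ 0 := by
    intro h0; apply hBC; rw [h0, zero_smul] at hCv
    have := vsub_eq_zero_iff_eq.mp hCv; exact this.symm
  exact ⟨rX / rC, by rw [hXv, hCv, smul_smul, div_mul_cancel₀ _ hrC]⟩

private lemma key {V : Type*} [NormedAddCommGroup V] [InnerProductSpace ℝ V]
    (a b c u x : V) (R t s : ℝ)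
    (ha : ‖a‖ = R) (hb : ‖b‖ = R) (hc : ‖c‖ = R)
    (hu : u = b + t • (c - b)) (hx : x = b + s • (c - b))
    (hperp : inner (𝕜 := ℝ) (a - u) (b - c) = 0)
    (hux : ‖x - u‖ = ‖u‖) :
    ‖(a + b + c) - x‖ ^ 2 = (R ^ 2 + ‖a + b + c‖ ^ 2) / 2 := by
  have haa : inner (𝕜 := ℝ) a a = R ^ 2 := by
    rw [real_inner_self_eq_norm_sq, ha]
  have hbb : inner (𝕜 := ℝ) b b = R ^ 2 := by
    rw [real_inner_self_eq_norm_sq, hb]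
  have hcc : inner (𝕜 := ℝ) c c = R ^ 2 := by
    rw [real_inner_self_eq_norm_sq, hc]
  have hux2 : ‖x - u‖ ^ 2 = ‖u‖ ^ 2 := by rw [hux]
  rw [← real_inner_self_eq_norm_sq, ← real_inner_self_eq_norm_sq] at hux2
  have hgoal : ‖(a + b + c) - x‖ ^ 2 = inner (𝕜 := ℝ) ((a+b+c) - x) ((a+b+c) - x) := by
    rw [real_inner_self_eq_norm_sq]
  have hnh : ‖a + b + c‖ ^ 2 = inner (𝕜 := ℝ) (a+b+c) (a+b+c) := by
    rw [real_inner_self_eq_norm_sq]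
  subst hu hx
  rw [hgoal, hnh]
  simp only [inner_sub_left, inner_sub_right, inner_add_left, inner_add_right,
    inner_smul_left, inner_smul_right, RCLike.ofReal_real_eq_id, id_eq] at *
  have h1 : inner (𝕜 := ℝ) b a = inner (𝕜 := ℝ) a b := real_inner_comm _ _
  have h2 : inner (𝕜 := ℝ) c a = inner (𝕜 := ℝ) a c := real_inner_comm _ _
  have h3 : inner (𝕜 := ℝ) c b = inner (𝕜 := ℝ) b c := real_inner_comm _ _
  simp only [starRingEnd_apply, star_trivial] at *
  linear_combination (2*s-1)*hperp + hux2 + (1/2)*haa + (2*s-t-1/2)*hbb + (1/2-2*s+t)*hcc + (s-1/2)*h1 + (1/2-s)*h2 + (s-1/2)*h3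

private lemma droz {V P : Type*} [NormedAddCommGroup V] [InnerProductSpace ℝ V]
    [MetricSpace P] [NormedAddTorsor V P] (A B C O H Hf X : P) (R : ℝ)
    (hA : dist O A = R) (hB : dist O B = R) (hC : dist O C = R)
    (hH : H -ᵥ O = (A -ᵥ O) + (B -ᵥ O) + (C -ᵥ O))
    (hBC : B ≠ C)
    (hcoll : Collinear ℝ ({B, C, Hf} : Set P))
    (hperp : inner (𝕜 := ℝ) (A -ᵥ Hf) (B -ᵥ C) = 0)
    (hXcoll : Collinear ℝ ({B, C, X} : Set P))
    (hdist : dist Hf X = dist Hf O) :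
    dist H X = Real.sqrt ((R ^ 2 + dist O H ^ 2) / 2) := by
  obtain ⟨t, ht⟩ := coll_param hcoll hBC
  obtain ⟨s, hs⟩ := coll_param hXcoll hBC
  set a := A -ᵥ O with h_a
  set b := B -ᵥ O with h_b
  set c := C -ᵥ O with h_c
  have hu : Hf -ᵥ O = b + t • (c - b) := by
    have : Hf -ᵥ O = (Hf -ᵥ B) + (B -ᵥ O) := (vsub_add_vsub_cancel _ _ _).symm
    rw [this, ht]; rw [show C -ᵥ B = c - b from (vsub_sub_vsub_cancel_right _ _ _).symm]; abel
  have hx : X -ᵥ O = b + s • (c - b) := by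
    have : X -ᵥ O = (X -ᵥ B) + (B -ᵥ O) := (vsub_add_vsub_cancel _ _ _).symm
    rw [this, hs]; rw [show C -ᵥ B = c - b from (vsub_sub_vsub_cancel_right _ _ _).symm]; abel
  have hperp' : inner (𝕜 := ℝ) (a - (Hf -ᵥ O)) (b - c) = 0 := by
    rwa [show a - (Hf -ᵥ O) = A -ᵥ Hf from vsub_sub_vsub_cancel_right _ _ _,
      show b - c = B -ᵥ C from vsub_sub_vsub_cancel_right _ _ _]
  have hux : ‖(X -ᵥ O) - (Hf -ᵥ O)‖ = ‖Hf -ᵥ O‖ := by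
    rw [show (X -ᵥ O) - (Hf -ᵥ O) = X -ᵥ Hf from vsub_sub_vsub_cancel_right _ _ _]
    rw [← dist_eq_norm_vsub, ← dist_eq_norm_vsub, dist_comm X Hf]
    exact hdist
  rw [hu] at hperp' hux
  rw [hx] at hux
  have ha' : ‖a‖ = R := by rw [h_a, ← dist_eq_norm_vsub, dist_comm]; exact hA
  have hb' : ‖b‖ = R := by rw [h_b, ← dist_eq_norm_vsub, dist_comm]; exact hB
  have hc' : ‖c‖ = R := by rw [h_c, ← dist_eq_norm_vsub, dist_comm]; exact hC
  have hk := key a b c (b + t • (c - b)) (b + s • (c - b)) R t s ha' hb' hc' rfl rfl hperp' hux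
  have hHX : dist H X = ‖(a + b + c) - (b + s • (c - b))‖ := by
    rw [dist_eq_norm_vsub V, show H -ᵥ X = (H -ᵥ O) - (X -ᵥ O) from
      (vsub_sub_vsub_cancel_right _ _ _).symm, hH, hx]
  have hOH : dist O H = ‖a + b + c‖ := by
    rw [dist_comm, dist_eq_norm_vsub V, hH]
  rw [hHX, hOH, ← Real.sqrt_sq (norm_nonneg _), hk]

/-- In an acute triangle, the circles centered at the altitude feet and passing
through the circumcenter `O` cut the corresponding sides in six points, each at
distance `√((R² + OH²)/2)` from the orthocenter `H`; hence these six points lie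
on the first Droz-Farny circle. -/
theorem stmt_11 (A B C O H H₁ H₂ H₃ : EuclideanSpace ℝ (Fin 2))
    (hABC : AffineIndependent ℝ ![A, B, C])
    (R : ℝ) (hR : 0 < R)
    (hO : dist O A = R ∧ dist O B = R ∧ dist O C = R)
    (hH : H -ᵥ O = (A -ᵥ O) + (B -ᵥ O) + (C -ᵥ O))
    (hacute : ∠ B A C < Real.pi / 2 ∧ ∠ A B C < Real.pi / 2 ∧ ∠ B C A < Real.pi / 2)
    (hH₁ : Collinear ℝ ({B, C, H₁} : Set (EuclideanSpace ℝ (Fin 2))) ∧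
      inner (𝕜 := ℝ) (A -ᵥ H₁) (B -ᵥ C) = 0)
    (hH₂ : Collinear ℝ ({C, A, H₂} : Set (EuclideanSpace ℝ (Fin 2))) ∧
      inner (𝕜 := ℝ) (B -ᵥ H₂) (C -ᵥ A) = 0)
    (hH₃ : Collinear ℝ ({A, B, H₃} : Set (EuclideanSpace ℝ (Fin 2))) ∧
      inner (𝕜 := ℝ) (C -ᵥ H₃) (A -ᵥ B) = 0) :
    (∀ X : EuclideanSpace ℝ (Fin 2),
      Collinear ℝ ({B, C, X} : Set (EuclideanSpace ℝ (Fin 2))) →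
      dist H₁ X = dist H₁ O →
      dist H X = Real.sqrt ((R ^ 2 + dist O H ^ 2) / 2)) ∧
    (∀ X : EuclideanSpace ℝ (Fin 2),
      Collinear ℝ ({C, A, X} : Set (EuclideanSpace ℝ (Fin 2))) →
      dist H₂ X = dist H₂ O →
      dist H X = Real.sqrt ((R ^ 2 + dist O H ^ 2) / 2)) ∧
    (∀ X : EuclideanSpace ℝ (Fin 2),
      Collinear ℝ ({A, B, X} : Set (EuclideanSpace ℝ (Fin 2))) →
      dist H₃ X = dist H₃ O →
      dist H X = Real.sqrt ((R ^ 2 + dist O H ^ 2) / 2)) := by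
  obtain ⟨hOA, hOB, hOC⟩ := hO
  have hinj := hABC.injective
  have hBC : B ≠ C := by
    intro h; exact (by decide : (1 : Fin 3) ≠ 2) (hinj (by simpa using h))
  have hCA : C ≠ A := by
    intro h; exact (by decide : (2 : Fin 3) ≠ 0) (hinj (by simpa using h))
  have hAB : A ≠ B := by
    intro h; exact (by decide : (0 : Fin 3) ≠ 1) (hinj (by simpa using h))
  have hH' : H -ᵥ O = (B -ᵥ O) + (C -ᵥ O) + (A -ᵥ O) := by rw [hH]; abel
  have hH'' : H -ᵥ O = (C -ᵥ O) + (A -ᵥ O) + (B -ᵥ O) := by rw [hH]; abel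
  refine ⟨fun X hX hd => droz A B C O H H₁ X R hOA hOB hOC hH hBC hH₁.1 hH₁.2 hX hd,
    fun X hX hd => droz B C A O H H₂ X R hOB hOC hOA hH' hCA hH₂.1 hH₂.2 hX hd,
    fun X hX hd => droz C A B O H H₃ X R hOC hOA hOB hH'' hAB hH₃.1 hH₃.2 hX hd⟩
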